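/- Let P, R, Q be formal power series in one variable X with natural number coefficients satisfying P = R + (1 + X)·Q. If the coefficient of X^j in P vanishes for every odd j, then Q = 0 and consequently P = R. -/

import Mathlib

/-- Lacunary Principle: If `P, R, Q` are formal power series with
natural number coefficients with `P = R + (1 + X) * Q` and every odd
coefficient of `P` vanishes, then `Q = 0` and `P = R`. -/
theorem lacunary_principle
    (P R Q : PowerSeries ℕ)
    (h : P = R + (1 + PowerSeries.X) * Q)
    (hodd : ∀ j : ℕ, Odd j → PowerSeries.coeff j P = 0) :
    Q = 0 ∧ P = R := by
  have hQ : Q = 0 := by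
    ext m
    simp only [map_zero]
    rcases Nat.even_or_odd m with he | ho
    · have h1 : PowerSeries.coeff (m + 1) P = 0 := hodd _ (Even.add_one he)
      rw [h, map_add, add_mul, one_mul, map_add, PowerSeries.coeff_succ_X_mul] at h1
      omega
    · have h1 := hodd m ho
      rw [h, map_add, add_mul, one_mul, map_add] at h1
      omega
  subst hQ
  rw [mul_zero, add_zero] at h
  exact ⟨rfl, h⟩
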